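/- arXiv:2512.11100 — 2 statements merged into one kernel-verified Lean document; each statement's English description precedes it below -/
import Mathlib

section
/- Finite-time decorrelation of transport observables: for any function A: {0,1}^L × {0,1}^L → ℝ of two successive states, any t ≥ 0 and any τ ≥ L+1, in the stationary process of the DSS one has E[A(z^t, z^{t+1}) A(z^{t+τ}, z^{t+τ+1})] = E[A(z^t, z^{t+1})] · E[A(z^{t+τ}, z^{t+τ+1})]. -/
namespace DSS

/-- A state of the DSS on `L` sites: a stable field `z : Fin L → Bool` together with a
finite multiset `w` of waiting particles (particles past site `L` have left the system). -/
structure State (L : ℕ) where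
  z : Fin L → Bool
  w : Multiset (Fin L)

variable {L : ℕ}

/-- The multiset holding the right neighbour of `x`; empty if the particle leaves the system. -/
def succSite (L : ℕ) (x : Fin L) : Multiset (Fin L) :=
  if h : x.val + 1 < L then {(⟨x.val + 1, h⟩ : Fin L)} else 0

/-- Evolution of a waiting particle at `x` when `z x = 1`: the waiting particle moves to
`x+1` and the stable particle at `x` becomes a waiting particle at `x`. -/
def topple (s : State L) (x : Fin L) : State L :=
  ⟨Function.update s.z x false, s.w + succSite L x⟩

/-- Evolution of a waiting particle at `x` when `z x = 0`, settling branch (probability p). -/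
def settle (s : State L) (x : Fin L) : State L :=
  ⟨Function.update s.z x true, s.w.erase x⟩

/-- Evolution of a waiting particle at `x` when `z x = 0`, jumping branch (probability q). -/
def jump (s : State L) (x : Fin L) : State L :=
  ⟨s.z, s.w.erase x + succSite L x⟩

/-- `stabilizeAux p q R n s c` is the probability that, evolving one waiting particle at a
time (the particle being selected by the rule `R`), the process started from `s` reaches
within `n` elementary steps a stable state whose stable field is `c`. -/
noncomputable def stabilizeAux (p q : ℝ) (R : State L → Option (Fin L)) :
    ℕ → State L → (Fin L → Bool) → ℝ
  | 0, s, c => if s.w = 0 ∧ s.z = c then 1 else 0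
  | n + 1, s, c =>
    match R s with
    | none => if s.z = c then 1 else 0
    | some x =>
      if s.z x then stabilizeAux p q R n (topple s x) c
      else p * stabilizeAux p q R n (settle s x) c
        + q * stabilizeAux p q R n (jump s x) c

/-- The canonical evolution rule: evolve the leftmost waiting particle. -/
def minRule (s : State L) : Option (Fin L) :=
  if h : s.w = 0 then none
  else some (s.w.toFinset.min'
    (Finset.nonempty_iff_ne_empty.mpr (by simpa [Multiset.toFinset_eq_empty] using h)))

/-- A termination measure: the stabilization process started from `s` ends after at most
`fuel s` elementary steps, whatever the rule and the randomness. -/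
def potential (s : State L) : ℕ :=
  (s.w.map fun x => L + 1 - x.val).sum + ∑ x : Fin L, (if s.z x then L + 1 - x.val else 0)

def fuel (s : State L) : ℕ := 2 * potential s + Multiset.card s.w

/-- Add one waiting particle at site `1` (index `0`). -/
def addGrain (r : Fin L → Bool) : State L :=
  ⟨r, if h : 0 < L then {(⟨0, h⟩ : Fin L)} else 0⟩

/-- The driven-dissipative transition kernel `W` of the DSS: add a particle at site 1 and
stabilize. -/
noncomputable def Wker (p q : ℝ) (r r' : Fin L → Bool) : ℝ :=
  stabilizeAux p q minRule (fuel (addGrain r)) (addGrain r) r'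

/-- `W` as a matrix on stable configurations. -/
noncomputable def Wmat (p q : ℝ) (L : ℕ) :
    Matrix (Fin L → Bool) (Fin L → Bool) ℝ :=
  Matrix.of fun r r' => Wker p q r r'

/-- The product Bernoulli(p) measure `ψ(r) = p^(Σ r) q^(L - Σ r)`. -/
noncomputable def psi (p q : ℝ) {L : ℕ} (r : Fin L → Bool) : ℝ :=
  p ^ (Finset.univ.filter fun x => r x = true).card *
    q ^ (L - (Finset.univ.filter fun x => r x = true).card)



variable {L : ℕ}

theorem State.ext' {s t : State L} (hz : s.z = t.z) (hw : s.w = t.w) : s = t := by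
  cases s; cases t; simp_all

theorem State.mk_eq {z z' : Fin L → Bool} {w w' : Multiset (Fin L)}
    (hz : z = z') (hw : w = w') : (⟨z, w⟩ : State L) = ⟨z', w'⟩ := by
  subst hz; subst hw; rfl

/-! ### Fuel lemmas -/

lemma card_le_fuel (s : State L) : Multiset.card s.w ≤ fuel s := Nat.le_add_left _ _

lemma succ_wsum (x : Fin L) :
    ((succSite L x).map (fun y : Fin L => L + 1 - y.val)).sum ≤ L - x.val := by
  unfold succSite
  split
  · simp
  · simp

lemma succ_card (x : Fin L) : Multiset.card (succSite L x) ≤ 1 := by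
  unfold succSite; split <;> simp

lemma wsum_erase {w : Multiset (Fin L)} {x : Fin L} (hx : x ∈ w)
    (f : Fin L → ℕ) : ((w.erase x).map f).sum + f x = (w.map f).sum := by
  conv_rhs => rw [← Multiset.cons_erase hx]
  simp [add_comm]

lemma card_erase {w : Multiset (Fin L)} {x : Fin L} (hx : x ∈ w) :
    Multiset.card (w.erase x) + 1 = Multiset.card w := by
  conv_rhs => rw [← Multiset.cons_erase hx]
  simp

lemma zsum_update (z : Fin L → Bool) (x : Fin L) (b : Bool) (f : Fin L → ℕ) :
    ∑ y : Fin L, (if (Function.update z x b) y then f y else 0)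
      = (if b then f x else 0) + ∑ y ∈ Finset.univ.erase x, (if z y then f y else 0) := by
  have h : (fun y => if (Function.update z x b) y then f y else 0)
      = Function.update (fun y => if z y then f y else 0) x (if b then f x else 0) := by
    funext y
    by_cases h : y = x
    · subst h; simp
    · simp [Function.update_of_ne h]
  rw [h, Finset.sum_update_of_mem (Finset.mem_univ x), ← Finset.erase_eq]

lemma zsum_split (z : Fin L → Bool) (x : Fin L) (f : Fin L → ℕ) :
    ∑ y : Fin L, (if z y then f y else 0)
      = (if z x then f x else 0) + ∑ y ∈ Finset.univ.erase x, (if z y then f y else 0) :=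
  (Finset.add_sum_erase _ _ (Finset.mem_univ x)).symm

lemma fuel_topple {s : State L} {x : Fin L} (hz : s.z x = true) :
    fuel (topple s x) < fuel s := by
  have hx : x.val < L := x.isLt
  unfold fuel potential topple
  simp only [Multiset.map_add, Multiset.sum_add, Multiset.card_add]
  rw [zsum_update]
  have h1 := succ_wsum x
  have h2 := succ_card x
  rw [zsum_split s.z x]
  simp only [hz, if_true, Bool.false_eq_true, if_false]
  omega

lemma fuel_settle {s : State L} {x : Fin L} (hx : x ∈ s.w) :
    fuel (settle s x) < fuel s := by
  unfold fuel potential settle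
  have h1 := wsum_erase hx (fun y : Fin L => L + 1 - y.val)
  have h2 := card_erase hx
  rw [zsum_update, zsum_split s.z x]
  have hxL : x.val < L := x.isLt
  simp only [if_true]
  have : (if s.z x then L + 1 - x.val else 0) ≤ L + 1 - x.val := by split <;> omega
  omega

lemma fuel_jump {s : State L} {x : Fin L} (hx : x ∈ s.w) :
    fuel (jump s x) < fuel s := by
  unfold fuel potential jump
  simp only [Multiset.map_add, Multiset.sum_add, Multiset.card_add]
  have h1 := wsum_erase hx (fun y : Fin L => L + 1 - y.val)
  have h2 := card_erase hx
  have h3 := succ_wsum x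
  have h4 := succ_card x
  have hxL : x.val < L := x.isLt
  omega

/-! ### Stab: stabilization with canonical fuel -/

noncomputable def Stab (p q : ℝ) (s : State L) (c : Fin L → Bool) : ℝ :=
  stabilizeAux p q minRule (fuel s) s c

lemma minRule_none {s : State L} (h : s.w = 0) : minRule s = none := by
  unfold minRule; rw [dif_pos h]

lemma minRule_some {s : State L} (h : s.w ≠ 0) :
    ∃ y ∈ s.w, minRule s = some y := by
  unfold minRule
  rw [dif_neg h]
  exact ⟨_, Multiset.mem_toFinset.mp (Finset.min'_mem _ _), rfl⟩

lemma aux_stable (p q : ℝ) (z c : Fin L → Bool) (n : ℕ) :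
    stabilizeAux p q minRule n ⟨z, 0⟩ c = if z = c then 1 else 0 := by
  cases n with
  | zero => simp [stabilizeAux]
  | succ n =>
    show (match minRule (⟨z, 0⟩ : State L) with
      | none => if (⟨z, (0:Multiset (Fin L))⟩ : State L).z = c then (1:ℝ) else 0
      | some x => if (⟨z, (0:Multiset (Fin L))⟩ : State L).z x then
            stabilizeAux p q minRule n (topple ⟨z, 0⟩ x) c
          else p * stabilizeAux p q minRule n (settle ⟨z, 0⟩ x) c
            + q * stabilizeAux p q minRule n (jump ⟨z, 0⟩ x) c) = _
    rw [minRule_none rfl]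

lemma aux_succ (p q : ℝ) : ∀ (n : ℕ) (s : State L) (c : Fin L → Bool), fuel s ≤ n →
    stabilizeAux p q minRule (n + 1) s c = stabilizeAux p q minRule n s c := by
  intro n
  induction n with
  | zero =>
    intro s c h
    have hw : s.w = 0 := by
      have := card_le_fuel s
      exact Multiset.card_eq_zero.mp (by omega)
    obtain ⟨z, w⟩ := s
    simp only at hw
    subst hw
    rw [aux_stable, aux_stable]
  | succ n ih =>
    intro s c h
    by_cases hw : s.w = 0
    · obtain ⟨z, w⟩ := s
      simp only at hw
      subst hw
      rw [aux_stable, aux_stable]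
    · obtain ⟨y, hy, hrule⟩ := minRule_some hw
      show (match minRule s with
        | none => if s.z = c then (1:ℝ) else 0
        | some x => if s.z x then stabilizeAux p q minRule (n+1) (topple s x) c
            else p * stabilizeAux p q minRule (n+1) (settle s x) c
              + q * stabilizeAux p q minRule (n+1) (jump s x) c)
        = (match minRule s with
        | none => if s.z = c then (1:ℝ) else 0
        | some x => if s.z x then stabilizeAux p q minRule n (topple s x) c
            else p * stabilizeAux p q minRule n (settle s x) c
              + q * stabilizeAux p q minRule n (jump s x) c)
      rw [hrule]
      by_cases hz : s.z y
      · simp only [hz, if_true]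
        exact ih _ _ (by have := fuel_topple hz; omega)
      · simp only [hz, Bool.false_eq_true, if_false]
        rw [ih _ _ (by have := fuel_settle hy; omega),
            ih _ _ (by have := fuel_jump hy; omega)]

lemma aux_of_le (p q : ℝ) {n : ℕ} {s : State L} (h : fuel s ≤ n) (c : Fin L → Bool) :
    stabilizeAux p q minRule n s c = Stab p q s c := by
  induction n with
  | zero =>
    have : fuel s = 0 := by omega
    unfold Stab; rw [this]
  | succ n ih =>
    rcases Nat.lt_or_ge (fuel s) (n+1) with h' | h'
    · rw [aux_succ p q n s c (by omega)]
      exact ih (by omega)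
    · have : fuel s = n + 1 := by omega
      unfold Stab; rw [this]

lemma Stab_stable (p q : ℝ) (z c : Fin L → Bool) :
    Stab p q ⟨z, 0⟩ c = if z = c then 1 else 0 := aux_stable p q z c _

/-- Unfolding `Stab` at the site chosen by `minRule`. -/
lemma Stab_min (p q : ℝ) {s : State L} {y : Fin L} (hrule : minRule s = some y)
    (hy : y ∈ s.w) (c : Fin L → Bool) :
    Stab p q s c = if s.z y then Stab p q (topple s y) c
      else p * Stab p q (settle s y) c + q * Stab p q (jump s y) c := by
  have hcard : (0:ℕ) < Multiset.card s.w := Multiset.card_pos.mpr (by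
    intro h0; rw [minRule_none h0] at hrule; cases hrule)
  have hfuel : 1 ≤ fuel s := le_trans hcard (card_le_fuel s)
  obtain ⟨m, hm⟩ : ∃ m, fuel s = m + 1 := ⟨fuel s - 1, by omega⟩
  have key : Stab p q s c = stabilizeAux p q minRule (m + 1) s c := by
    unfold Stab; rw [hm]
  rw [key]
  show (match minRule s with
    | none => if s.z = c then (1:ℝ) else 0
    | some x => if s.z x then stabilizeAux p q minRule m (topple s x) c
        else p * stabilizeAux p q minRule m (settle s x) c
          + q * stabilizeAux p q minRule m (jump s x) c) = _
  rw [hrule]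
  by_cases hz : s.z y
  · simp only [hz, if_true]
    exact aux_of_le p q (by have := fuel_topple hz; omega) c
  · simp only [hz, Bool.false_eq_true, if_false]
    rw [aux_of_le p q (by have := fuel_settle hy; omega) c,
        aux_of_le p q (by have := fuel_jump hy; omega) c]
/-! ### Commutation of elementary moves -/

section Moves
variable {s : State L} {x y : Fin L} (hxy : x ≠ y)

lemma topple_z (s : State L) (y : Fin L) (hxy : x ≠ y) : (topple s y).z x = s.z x :=
  Function.update_of_ne hxy _ _

lemma settle_z (s : State L) (y : Fin L) (hxy : x ≠ y) : (settle s y).z x = s.z x :=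
  Function.update_of_ne hxy _ _

lemma jump_z (s : State L) (y : Fin L) : (jump s y).z x = s.z x := rfl

include hxy

lemma comm_TT : topple (topple s y) x = topple (topple s x) y := by
  apply State.ext'
  · simp only [topple, settle, jump]
    exact Function.update_comm hxy.symm _ _ _
  · show s.w + succSite L y + succSite L x = s.w + succSite L x + succSite L y
    rw [add_assoc, add_assoc, add_comm (succSite L y)]

lemma comm_ST (hx : x ∈ s.w) : settle (topple s y) x = topple (settle s x) y := by
  apply State.ext'
  · simp only [topple, settle, jump]
    exact Function.update_comm hxy.symm _ _ _
  · show (s.w + succSite L y).erase x = s.w.erase x + succSite L y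
    exact Multiset.erase_add_left_pos _ hx

omit hxy in
lemma comm_JT (hx : x ∈ s.w) : jump (topple s y) x = topple (jump s x) y := by
  apply State.ext'
  · rfl
  · show (s.w + succSite L y).erase x + succSite L x
      = s.w.erase x + succSite L x + succSite L y
    rw [Multiset.erase_add_left_pos _ hx, add_assoc, add_assoc, add_comm (succSite L y)]

lemma comm_SS : settle (settle s y) x = settle (settle s x) y := by
  apply State.ext'
  · simp only [topple, settle, jump]
    exact Function.update_comm hxy.symm _ _ _
  · exact Multiset.erase_comm _ _ _

lemma comm_JS (hx : x ∈ s.w) (hy : y ∈ s.w) :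
    jump (settle s y) x = settle (jump s x) y := by
  apply State.ext'
  · rfl
  · show (s.w.erase y).erase x + succSite L x = (s.w.erase x + succSite L x).erase y
    rw [Multiset.erase_add_left_pos _ ((Multiset.mem_erase_of_ne hxy.symm).mpr hy),
      Multiset.erase_comm]

lemma comm_JJ (hx : x ∈ s.w) (hy : y ∈ s.w) :
    jump (jump s y) x = jump (jump s x) y := by
  apply State.ext'
  · rfl
  · show (s.w.erase y + succSite L y).erase x + succSite L x
      = (s.w.erase x + succSite L x).erase y + succSite L y
    rw [Multiset.erase_add_left_pos _ ((Multiset.mem_erase_of_ne hxy).mpr hx),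
      Multiset.erase_add_left_pos _ ((Multiset.mem_erase_of_ne hxy.symm).mpr hy),
      Multiset.erase_comm, add_assoc, add_assoc, add_comm (succSite L y)]

end Moves
/-! ### The exchange lemma: any waiting particle may be evolved first. -/

lemma mem_topple_w {s : State L} {x y : Fin L} (hx : x ∈ s.w) : x ∈ (topple s y).w :=
  Multiset.mem_add.mpr (Or.inl hx)

lemma mem_settle_w {s : State L} {x y : Fin L} (hxy : x ≠ y) (hx : x ∈ s.w) :
    x ∈ (settle s y).w := (Multiset.mem_erase_of_ne hxy).mpr hx

lemma mem_jump_w {s : State L} {x y : Fin L} (hxy : x ≠ y) (hx : x ∈ s.w) :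
    x ∈ (jump s y).w :=
  Multiset.mem_add.mpr (Or.inl ((Multiset.mem_erase_of_ne hxy).mpr hx))

lemma Stab_exchange (p q : ℝ) : ∀ (n : ℕ) (s : State L), fuel s ≤ n →
    ∀ x ∈ s.w, ∀ c,
    Stab p q s c = if s.z x then Stab p q (topple s x) c
      else p * Stab p q (settle s x) c + q * Stab p q (jump s x) c := by
  intro n
  induction n with
  | zero =>
    intro s h x hx c
    have := card_le_fuel s
    have : s.w = 0 := Multiset.card_eq_zero.mp (by omega)
    rw [this] at hx
    exact absurd hx (Multiset.notMem_zero x)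
  | succ n ih =>
    intro s h x hx c
    have hw : s.w ≠ 0 := fun h0 => by
      rw [h0] at hx; exact Multiset.notMem_zero x hx
    obtain ⟨y, hy, hrule⟩ := minRule_some hw
    rw [Stab_min p q hrule hy c]
    by_cases hxy : x = y
    · subst hxy; rfl
    · have hyx : y ≠ x := fun h' => hxy h'.symm
      -- fuel bounds for one-move states
      have fT : ∀ {u : Fin L}, s.z u = true → fuel (topple s u) ≤ n :=
        fun hu => by have := fuel_topple hu; omega
      have fS : ∀ {u : Fin L}, u ∈ s.w → fuel (settle s u) ≤ n :=
        fun hu => by have := fuel_settle hu; omega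
      have fJ : ∀ {u : Fin L}, u ∈ s.w → fuel (jump s u) ≤ n :=
        fun hu => by have := fuel_jump hu; omega
      by_cases hzy : s.z y
      · -- left side: topple at y, then IH at x
        rw [ih (topple s y) (fT hzy) x (mem_topple_w hx) c]
        rw [topple_z s y hxy]
        by_cases hzx : s.z x
        · rw [ih (topple s x) (fT hzx) y (mem_topple_w hy) c, topple_z s x hyx]
          simp only [hzx, hzy, eq_self_iff_true, if_true]
          rw [comm_TT hxy]
        · rw [ih (settle s x) (fS hx) y (mem_settle_w hyx hy) c,
            ih (jump s x) (fJ hx) y (mem_jump_w hyx hy) c,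
            settle_z s x hyx, jump_z s x]
          simp only [hzx, hzy, eq_self_iff_true, if_true, Bool.false_eq_true, if_false]
          rw [comm_ST hxy hx, comm_JT hx]
      · rw [ih (settle s y) (fS hy) x (mem_settle_w hxy hx) c,
          ih (jump s y) (fJ hy) x (mem_jump_w hxy hx) c,
          settle_z s y hxy, jump_z s y]
        by_cases hzx : s.z x
        · rw [ih (topple s x) (fT hzx) y (mem_topple_w hy) c, topple_z s x hyx]
          simp only [hzx, hzy, eq_self_iff_true, if_true, Bool.false_eq_true, if_false]
          rw [show settle (topple s x) y = topple (settle s y) x from (comm_ST hyx hy),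
            show jump (topple s x) y = topple (jump s y) x from (comm_JT hy)]
        · rw [ih (settle s x) (fS hx) y (mem_settle_w hyx hy) c,
            ih (jump s x) (fJ hx) y (mem_jump_w hyx hy) c,
            settle_z s x hyx, jump_z s x]
          simp only [hzx, hzy, eq_self_iff_true, if_true, Bool.false_eq_true, if_false]
          rw [comm_SS hxy, comm_JS hxy hx hy, comm_JJ hxy hx hy,
            show settle (jump s y) x = jump (settle s x) y from (comm_JS hyx hy hx).symm]
          ring
/-! ### Composition: stabilizing `w` and then `v` is stabilizing `w + v`. -/

lemma Stab_comp (p q : ℝ) : ∀ (n : ℕ) (z : Fin L → Bool) (w : Multiset (Fin L)),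
    fuel (⟨z, w⟩ : State L) ≤ n → ∀ (v : Multiset (Fin L)) (c : Fin L → Bool),
    ∑ s : Fin L → Bool, Stab p q ⟨z, w⟩ s * Stab p q ⟨s, v⟩ c
      = Stab p q ⟨z, w + v⟩ c := by
  have stable_case : ∀ (z : Fin L → Bool) (v : Multiset (Fin L)) (c : Fin L → Bool),
      ∑ s : Fin L → Bool, Stab p q ⟨z, 0⟩ s * Stab p q ⟨s, v⟩ c
        = Stab p q ⟨z, (0 : Multiset (Fin L)) + v⟩ c := by
    intro z v c
    rw [zero_add]
    have : ∀ s : Fin L → Bool, Stab p q ⟨z, 0⟩ s * Stab p q ⟨s, v⟩ c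
        = if z = s then Stab p q ⟨s, v⟩ c else 0 := by
      intro s; rw [Stab_stable]; split <;> simp
    rw [Finset.sum_congr rfl fun s _ => this s, Finset.sum_ite_eq]
    simp
  intro n
  induction n with
  | zero =>
    intro z w h v c
    have hc := card_le_fuel (⟨z, w⟩ : State L)
    have hw : w = 0 := Multiset.card_eq_zero.mp (by simp only at hc ⊢; omega)
    subst hw
    exact stable_case z v c
  | succ n ih =>
    intro z w h v c
    by_cases hw : w = 0
    · subst hw; exact stable_case z v c
    · obtain ⟨y, hy⟩ := Multiset.exists_mem_of_ne_zero hw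
      have hyv : y ∈ w + v := Multiset.mem_add.mpr (Or.inl hy)
      have hex := Stab_exchange p q (n+1) ⟨z, w⟩ h y hy
      have hex' := Stab_exchange p q (2 * potential (⟨z, w + v⟩ : State L)
          + Multiset.card (w + v)) ⟨z, w + v⟩ (le_refl _) y hyv
      by_cases hzy : z y
      · -- topple case
        have h1 : ∀ s, Stab p q ⟨z, w⟩ s = Stab p q ⟨Function.update z y false,
            w + succSite L y⟩ s := by
          intro s; rw [hex s]; simp only [hzy, if_true]; rfl
        have hRW : Stab p q ⟨z, w + v⟩ c = Stab p q ⟨Function.update z y false,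
            (w + v) + succSite L y⟩ c := by
          rw [hex' c]; simp only [hzy, if_true]; rfl
        rw [Finset.sum_congr rfl fun s _ => by rw [h1 s], hRW,
          ih (Function.update z y false) (w + succSite L y)
            (by show fuel (topple (⟨z, w⟩ : State L) y) ≤ n
                have := fuel_topple (s := (⟨z, w⟩ : State L)) (x := y) hzy; omega) v c]
        congr 1
        exact State.ext' rfl (add_right_comm w (succSite L y) v)
      · have h1 : ∀ s, Stab p q ⟨z, w⟩ s
            = p * Stab p q ⟨Function.update z y true, w.erase y⟩ s
              + q * Stab p q ⟨z, w.erase y + succSite L y⟩ s := by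
          intro s; rw [hex s]; simp only [hzy, Bool.false_eq_true, if_false]; rfl
        have hRW : Stab p q ⟨z, w + v⟩ c
            = p * Stab p q ⟨Function.update z y true, w.erase y + v⟩ c
              + q * Stab p q ⟨z, (w.erase y + v) + succSite L y⟩ c := by
          rw [hex' c]; simp only [hzy, Bool.false_eq_true, if_false]
          rw [show (settle ⟨z, w + v⟩ y) = ⟨Function.update z y true, w.erase y + v⟩
              from State.ext' rfl (Multiset.erase_add_left_pos _ hy),
            show (jump ⟨z, w + v⟩ y) = ⟨z, (w.erase y + v) + succSite L y⟩
              from State.ext' rfl (show (w + v).erase y + succSite L y = _ by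
                rw [Multiset.erase_add_left_pos _ hy])]
        rw [Finset.sum_congr rfl fun s _ => by rw [h1 s], hRW]
        simp only [add_mul, mul_assoc]
        rw [Finset.sum_add_distrib, ← Finset.mul_sum, ← Finset.mul_sum,
          ih (Function.update z y true) (w.erase y)
            (by show fuel (settle (⟨z, w⟩ : State L) y) ≤ n
                have := fuel_settle (s := (⟨z, w⟩ : State L)) hy; omega) v c,
          ih z (w.erase y + succSite L y)
            (by show fuel (jump (⟨z, w⟩ : State L) y) ≤ n
                have := fuel_jump (s := (⟨z, w⟩ : State L)) hy; omega) v c]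
        rw [show (⟨z, w.erase y + succSite L y + v⟩ : State L)
            = ⟨z, (w.erase y + v) + succSite L y⟩ from
          State.ext' rfl (add_right_comm _ _ _)]
/-! ### Resolving one site completely -/

lemma not_mem_succSite (x : Fin L) : x ∉ succSite L x := by
  unfold succSite
  split
  · simp only [Multiset.mem_singleton]
    intro h
    have := congrArg Fin.val h
    simp at this
  · simp

lemma erase_replicate_add {k : ℕ} (hk : 1 ≤ k) (x : Fin L) (G : Multiset (Fin L)) :
    (Multiset.replicate k x + G).erase x = Multiset.replicate (k - 1) x + G := by
  rw [show k = (k - 1) + 1 by omega, Multiset.replicate_succ, Multiset.cons_add,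
    Multiset.erase_cons_head, Nat.add_sub_cancel]

lemma mem_replicate_add {k : ℕ} (hk : 1 ≤ k) (x : Fin L) (G : Multiset (Fin L)) :
    x ∈ Multiset.replicate k x + G :=
  Multiset.mem_add.mpr (Or.inl (Multiset.mem_replicate.mpr ⟨by omega, rfl⟩))

lemma nsmul_succ_shift {k : ℕ} (hk : 1 ≤ k) (v G : Multiset (Fin L)) :
    (k - 1) • v + (G + v) = k • v + G := by
  rw [show k = (k - 1) + 1 by omega, succ_nsmul]
  have : k - 1 + 1 - 1 = k - 1 := by omega
  rw [this, add_assoc, add_comm G v, ← add_assoc]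

lemma resolve_site (p q : ℝ) (hpq : p + q = 1) :
    ∀ (n k : ℕ), 1 ≤ k → ∀ (x : Fin L) (G : Multiset (Fin L)), x ∉ G →
    ∀ (z c : Fin L → Bool), fuel (⟨z, Multiset.replicate k x + G⟩ : State L) ≤ n →
    Stab p q ⟨z, Multiset.replicate k x + G⟩ c
      = p * Stab p q ⟨Function.update z x true,
          (k + (if z x then 1 else 0) - 1) • succSite L x + G⟩ c
        + q * Stab p q ⟨Function.update z x false,
          (k + (if z x then 1 else 0)) • succSite L x + G⟩ c := by
  intro n
  induction n with
  | zero =>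
    intro k hk x G hG z c h
    exfalso
    have hc := card_le_fuel (⟨z, Multiset.replicate k x + G⟩ : State L)
    simp only [Multiset.card_add, Multiset.card_replicate] at hc
    omega
  | succ n ih =>
    intro k hk x G hG z c h
    have hx : x ∈ Multiset.replicate k x + G := mem_replicate_add hk x G
    have hex := Stab_exchange p q (n+1) ⟨z, Multiset.replicate k x + G⟩ h x hx c
    by_cases hzx : z x
    · -- topple
      simp only [hzx, if_true] at hex ⊢
      rw [hex, show topple ⟨z, Multiset.replicate k x + G⟩ x
          = ⟨Function.update z x false, Multiset.replicate k x + (G + succSite L x)⟩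
          from State.mk_eq (w := Multiset.replicate k x + G + succSite L x) rfl
            (add_assoc _ _ _)]
      have hG' : x ∉ G + succSite L x :=
        fun hm => (Multiset.mem_add.mp hm).elim hG (not_mem_succSite x)
      have hfuel : fuel (⟨Function.update z x false,
          Multiset.replicate k x + (G + succSite L x)⟩ : State L) ≤ n := by
        rw [show (⟨Function.update z x false,
            Multiset.replicate k x + (G + succSite L x)⟩ : State L)
          = topple ⟨z, Multiset.replicate k x + G⟩ x
          from (State.mk_eq rfl (add_assoc _ _ _)).symm]
        have := fuel_topple (s := (⟨z, Multiset.replicate k x + G⟩ : State L)) (x := x) hzx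
        omega
      rw [ih k hk x (G + succSite L x) hG' _ c hfuel]
      simp only [Function.update_idem, Function.update_self,
        Bool.false_eq_true, if_false, Nat.add_zero, Nat.add_sub_cancel]
      rw [show (k - 1) • succSite L x + (G + succSite L x) = k • succSite L x + G from
          nsmul_succ_shift hk _ _,
        show k • succSite L x + (G + succSite L x) = (k + 1) • succSite L x + G by
          rw [succ_nsmul, add_assoc, add_comm G (succSite L x), ← add_assoc]]
    · -- settle / jump
      simp only [hzx, Bool.false_eq_true, if_false] at hex ⊢
      have hzfx : z x = false := by
        revert hzx; cases z x <;> simp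
      rw [hex,
        show settle ⟨z, Multiset.replicate k x + G⟩ x
          = ⟨Function.update z x true, Multiset.replicate (k-1) x + G⟩
          from State.mk_eq (w := (Multiset.replicate k x + G).erase x) rfl
            (erase_replicate_add hk x G),
        show jump ⟨z, Multiset.replicate k x + G⟩ x
          = ⟨z, Multiset.replicate (k-1) x + (G + succSite L x)⟩
          from State.mk_eq (w := (Multiset.replicate k x + G).erase x + succSite L x) rfl
            (show (Multiset.replicate k x + G).erase x + succSite L x = _
            by rw [erase_replicate_add hk x G, add_assoc])]
      simp only [Nat.add_zero]
      by_cases hk1 : k = 1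
      · subst hk1
        simp only [Nat.sub_self, Multiset.replicate_zero, zero_add, zero_smul,
          one_smul, one_nsmul]
        rw [show (⟨z, G + succSite L x⟩ : State L)
            = ⟨Function.update z x false, succSite L x + G⟩
          from State.mk_eq (by rw [← hzfx]; exact (Function.update_eq_self x z).symm)
            (add_comm _ _)]
      · have hk2 : 1 ≤ k - 1 := by omega
        have hfS : fuel (⟨Function.update z x true,
            Multiset.replicate (k-1) x + G⟩ : State L) ≤ n := by
          rw [show (⟨Function.update z x true,
              Multiset.replicate (k-1) x + G⟩ : State L)
            = settle ⟨z, Multiset.replicate k x + G⟩ x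
            from (State.mk_eq rfl (erase_replicate_add hk x G)).symm]
          have := fuel_settle (s := (⟨z, Multiset.replicate k x + G⟩ : State L)) hx
          omega
        have hfJ : fuel (⟨z,
            Multiset.replicate (k-1) x + (G + succSite L x)⟩ : State L) ≤ n := by
          rw [show (⟨z, Multiset.replicate (k-1) x + (G + succSite L x)⟩ : State L)
            = jump ⟨z, Multiset.replicate k x + G⟩ x
            from (State.mk_eq rfl (show (Multiset.replicate k x + G).erase x + succSite L x = _
              by rw [erase_replicate_add hk x G, add_assoc])).symm]
          have := fuel_jump (s := (⟨z, Multiset.replicate k x + G⟩ : State L)) hx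
          omega
        have hG' : x ∉ G + succSite L x :=
          fun hm => (Multiset.mem_add.mp hm).elim hG (not_mem_succSite x)
        rw [ih (k-1) hk2 x G hG _ c hfS, ih (k-1) hk2 x (G + succSite L x) hG' _ c hfJ]
        simp only [Function.update_idem, Function.update_self, if_true, hzfx,
          Bool.false_eq_true, if_false, Nat.add_zero]
        rw [show k - 1 + 1 - 1 = k - 1 by omega, show k - 1 + 1 = k by omega,
          show (k - 1 - 1) • succSite L x + (G + succSite L x)
            = (k - 1) • succSite L x + G from nsmul_succ_shift hk2 _ _,
          show (k - 1) • succSite L x + (G + succSite L x)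
            = k • succSite L x + G from nsmul_succ_shift hk _ _]
        linear_combination (p * Stab p q ⟨Function.update z x true,
            (k - 1) • succSite L x + G⟩ c
          + q * Stab p q ⟨Function.update z x false, k • succSite L x + G⟩ c) * hpq
/-! ### Sweeping all sites: many grains produce the product measure -/

def sSite (L x : ℕ) : Multiset (Fin L) :=
  if h : x < L then {(⟨x, h⟩ : Fin L)} else 0

lemma succSite_eq_sSite (x : Fin L) : succSite L x = sSite L (x.val + 1) := rfl

open Classical in
lemma sweep (p q : ℝ) (hpq : p + q = 1) :
    ∀ (d x : ℕ), x + d = L → ∀ k : ℕ, L - x ≤ k → ∀ z c : Fin L → Bool,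
    Stab p q ⟨z, k • sSite L x⟩ c
      = if (∀ y : Fin L, (y : ℕ) < x → z y = c y) then
          ∏ y ∈ Finset.univ.filter (fun y : Fin L => x ≤ (y : ℕ)), (if c y then p else q)
        else 0 := by
  intro d
  induction d with
  | zero =>
    intro x hx k hk z c
    have hxL : x = L := by omega
    have hs : sSite L x = 0 := by unfold sSite; rw [dif_neg (by omega)]
    rw [hs, smul_zero, Stab_stable]
    have hfilter : Finset.univ.filter (fun y : Fin L => x ≤ (y : ℕ)) = ∅ := by
      apply Finset.filter_false_of_mem
      intro y _
      have := y.isLt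
      omega
    rw [hfilter, Finset.prod_empty]
    by_cases hzc : z = c
    · subst hzc
      rw [if_pos rfl, if_pos fun y _ => rfl]
    · rw [if_neg hzc, if_neg]
      intro hcond
      refine hzc (funext fun y => hcond y ?_)
      have := y.isLt
      omega
  | succ d ih =>
    intro x hx k hk z c
    have hxL : x < L := by omega
    have hk1 : 1 ≤ k := by omega
    set X : Fin L := ⟨x, hxL⟩ with hX
    have hsX : sSite L x = {X} := by unfold sSite; rw [dif_pos hxL]
    have hrepl : k • sSite L x = Multiset.replicate k X + 0 := by
      rw [hsX, Multiset.nsmul_singleton, add_zero]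
    rw [hrepl, resolve_site p q hpq (fuel (⟨z, Multiset.replicate k X + 0⟩ : State L))
      k hk1 X 0 (Multiset.notMem_zero X) z c (le_refl _)]
    have hsucc : succSite L X = sSite L (x + 1) := rfl
    -- apply the induction hypothesis to the two resulting states
    have hb : (if z X then 1 else 0) ≤ 1 := by split <;> omega
    have h1 : L - (x+1) ≤ k + (if z X = true then 1 else 0) - 1 := by
      revert hb; split <;> intro _ <;> omega
    have h2 : L - (x+1) ≤ k + (if z X = true then 1 else 0) := by
      revert hb; split <;> intro _ <;> omega
    rw [show ((k + (if z X = true then 1 else 0) - 1) • succSite L X + 0 : Multiset (Fin L))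
        = (k + (if z X = true then 1 else 0) - 1) • sSite L (x+1) by rw [add_zero, hsucc],
      show ((k + (if z X = true then 1 else 0)) • succSite L X + 0 : Multiset (Fin L))
        = (k + (if z X = true then 1 else 0)) • sSite L (x+1) by rw [add_zero, hsucc],
      ih (x+1) (by omega) _ h1 (Function.update z X true) c,
      ih (x+1) (by omega) _ h2 (Function.update z X false) c]
    -- condition lemmas
    have hcond : ∀ b : Bool, (∀ y : Fin L, (y : ℕ) < x + 1 → Function.update z X b y = c y)
        ↔ ((∀ y : Fin L, (y : ℕ) < x → z y = c y) ∧ c X = b) := by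
      intro b
      constructor
      · intro h
        refine ⟨fun y hy => ?_, ?_⟩
        · have hyX : y ≠ X := by
            intro he; rw [he] at hy; simp only [hX] at hy; omega
          rw [← h y (by omega), Function.update_of_ne hyX]
        · rw [← h X (by simp [hX]), Function.update_self]
      · rintro ⟨h1', h2'⟩ y hy
        by_cases hyX : y = X
        · subst hyX; rw [Function.update_self, ← h2']
        · have hvy : (y : ℕ) ≠ x := fun hv => hyX (Fin.ext hv)
          rw [Function.update_of_ne hyX]
          exact h1' y (by omega)
    have hins : Finset.univ.filter (fun y : Fin L => x ≤ (y : ℕ))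
        = insert X (Finset.univ.filter (fun y : Fin L => x + 1 ≤ (y : ℕ))) := by
      ext y
      simp only [Finset.mem_filter, Finset.mem_univ, true_and, Finset.mem_insert]
      constructor
      · intro hy
        rcases Nat.eq_or_lt_of_le hy with h' | h'
        · exact Or.inl (Fin.ext h'.symm)
        · exact Or.inr h'
      · rintro (rfl | hy)
        · exact le_refl _
        · omega
    have hXnot : X ∉ Finset.univ.filter (fun y : Fin L => x + 1 ≤ (y : ℕ)) := by
      simp [hX]
    rw [hins, Finset.prod_insert hXnot]
    simp only [hcond]
    by_cases hag : ∀ y : Fin L, (y : ℕ) < x → z y = c y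
    · by_cases hcX : c X
      · simp [hag, hcX]
      · simp [hag, hcX]
    · simp [hag]
/-! ### Consequences: rows of `W^m` for `m ≥ L` are exactly `psi` -/

lemma psi_eq_prod (p q : ℝ) (c : Fin L → Bool) :
    psi p q c = ∏ y : Fin L, (if c y then p else q) := by
  unfold psi
  rw [Finset.prod_ite, Finset.prod_const, Finset.prod_const]
  congr 2
  have := Finset.card_filter_add_card_filter_not
    (s := (Finset.univ : Finset (Fin L))) (p := fun y => c y = true)
  rw [Finset.card_univ, Fintype.card_fin] at this
  omega

lemma Stab_batch (p q : ℝ) (hpq : p + q = 1) {k : ℕ} (hk : L ≤ k) (z c : Fin L → Bool) :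
    Stab p q ⟨z, k • sSite L 0⟩ c = psi p q c := by
  rw [sweep p q hpq L 0 (by omega) k (by omega) z c, psi_eq_prod]
  rw [if_pos (fun y hy => absurd hy (Nat.not_lt_zero _))]
  congr 1
  apply Finset.filter_true_of_mem
  intro y _
  omega

lemma Wker_eq_Stab (p q : ℝ) (hL : 0 < L) (r c : Fin L → Bool) :
    Wker p q r c = Stab p q ⟨r, 1 • sSite L 0⟩ c := by
  have h : addGrain r = (⟨r, 1 • sSite L 0⟩ : State L) := by
    apply State.mk_eq rfl
    show (if h : 0 < L then ({⟨0, h⟩} : Multiset (Fin L)) else 0) = 1 • sSite L 0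
    rw [dif_pos hL, one_nsmul]
    unfold sSite
    rw [dif_pos hL]
  show Stab p q (addGrain r) c = _
  rw [h]

lemma Wmat_pow (p q : ℝ) (hL : 0 < L) :
    ∀ (n : ℕ) (r c : Fin L → Bool),
    ((Wmat p q L) ^ n) r c = Stab p q ⟨r, n • sSite L 0⟩ c := by
  intro n
  induction n with
  | zero =>
    intro r c
    rw [pow_zero, zero_smul, Stab_stable]
    exact Matrix.one_apply
  | succ n ih =>
    intro r c
    rw [pow_succ, Matrix.mul_apply]
    have : ∀ s : Fin L → Bool, ((Wmat p q L) ^ n) r s * (Wmat p q L) s c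
        = Stab p q ⟨r, n • sSite L 0⟩ s * Stab p q ⟨s, 1 • sSite L 0⟩ c := by
      intro s
      rw [ih r s]
      congr 1
      exact Wker_eq_Stab p q hL s c
    rw [Finset.sum_congr rfl fun s _ => this s,
      Stab_comp p q (fuel (⟨r, n • sSite L 0⟩ : State L)) r (n • sSite L 0)
        (le_refl _) (1 • sSite L 0) c]
    congr 2
    rw [← add_nsmul]

lemma Wpow_ge (p q : ℝ) (hpq : p + q = 1) (hL : 0 < L) {m : ℕ} (hm : L ≤ m)
    (r c : Fin L → Bool) : ((Wmat p q L) ^ m) r c = psi p q c := by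
  rw [Wmat_pow p q hL m r c, Stab_batch p q hpq hm]

lemma psi_stationary (p q : ℝ) (hpq : p + q = 1) (hL : 0 < L) (t : ℕ)
    (r1 : Fin L → Bool) :
    ∑ r0 : Fin L → Bool, psi p q r0 * ((Wmat p q L) ^ t) r0 r1 = psi p q r1 := by
  have h0 : ∀ r0 : Fin L → Bool, psi p q r0
      = ((Wmat p q L) ^ L) (fun _ => false) r0 :=
    fun r0 => (Wpow_ge p q hpq hL (le_refl L) _ r0).symm
  calc ∑ r0 : Fin L → Bool, psi p q r0 * ((Wmat p q L) ^ t) r0 r1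
      = ∑ r0 : Fin L → Bool, ((Wmat p q L) ^ L) (fun _ => false) r0
          * ((Wmat p q L) ^ t) r0 r1 :=
        Finset.sum_congr rfl fun r0 _ => by rw [h0 r0]
    _ = ((Wmat p q L) ^ L * (Wmat p q L) ^ t) (fun _ => false) r1 :=
        (Matrix.mul_apply).symm
    _ = ((Wmat p q L) ^ (L + t)) (fun _ => false) r1 := by rw [pow_add]
    _ = psi p q r1 := Wpow_ge p q hpq hL (by omega) _ r1

/-- finite-time decorrelation of transport observables. For any function
`A` of two successive states, any `t ≥ 0` and any `τ ≥ L+1`, in the stationary process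
`E[A(z^t,z^{t+1}) A(z^{t+τ},z^{t+τ+1})] = E[A(z^t,z^{t+1})] E[A(z^{t+τ},z^{t+τ+1})]`. -/
theorem transport_observables_decorrelate
    (L : ℕ) (hL : 0 < L) (p q : ℝ) (hp : 0 < p) (hq : 0 < q) (hpq : p + q = 1)
    (A : (Fin L → Bool) → (Fin L → Bool) → ℝ) (t τ : ℕ) (hτ : L + 1 ≤ τ) :
    (∑ r0 : Fin L → Bool, ∑ r1 : Fin L → Bool, ∑ r2 : Fin L → Bool,
      ∑ r3 : Fin L → Bool, ∑ r4 : Fin L → Bool,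
        psi p q r0 * ((Wmat p q L) ^ t) r0 r1 * Wker p q r1 r2 * A r1 r2 *
          ((Wmat p q L) ^ (τ - 1)) r2 r3 * Wker p q r3 r4 * A r3 r4)
      =
    (∑ r0 : Fin L → Bool, ∑ r1 : Fin L → Bool, ∑ r2 : Fin L → Bool,
        psi p q r0 * ((Wmat p q L) ^ t) r0 r1 * Wker p q r1 r2 * A r1 r2) *
    (∑ r0 : Fin L → Bool, ∑ r1 : Fin L → Bool, ∑ r2 : Fin L → Bool,
        psi p q r0 * ((Wmat p q L) ^ (t + τ)) r0 r1 * Wker p q r1 r2 * A r1 r2) := by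
  have hτfact : ∀ r2 r3 : Fin L → Bool, ((Wmat p q L) ^ (τ - 1)) r2 r3 = psi p q r3 :=
    fun r2 r3 => Wpow_ge p q hpq hL (by omega) r2 r3
  have hF : ∀ u : ℕ,
      (∑ r0 : Fin L → Bool, ∑ r1 : Fin L → Bool, ∑ r2 : Fin L → Bool,
        psi p q r0 * ((Wmat p q L) ^ u) r0 r1 * Wker p q r1 r2 * A r1 r2)
      = ∑ r1 : Fin L → Bool, ∑ r2 : Fin L → Bool,
          psi p q r1 * Wker p q r1 r2 * A r1 r2 := by
    intro u
    rw [Finset.sum_comm]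
    refine Finset.sum_congr rfl fun r1 _ => ?_
    rw [Finset.sum_comm]
    refine Finset.sum_congr rfl fun r2 _ => ?_
    calc ∑ r0 : Fin L → Bool,
          psi p q r0 * ((Wmat p q L) ^ u) r0 r1 * Wker p q r1 r2 * A r1 r2
        = (∑ r0 : Fin L → Bool, psi p q r0 * ((Wmat p q L) ^ u) r0 r1)
            * (Wker p q r1 r2 * A r1 r2) := by
          rw [Finset.sum_mul]
          exact Finset.sum_congr rfl fun r0 _ => by ring
      _ = psi p q r1 * Wker p q r1 r2 * A r1 r2 := by
          rw [psi_stationary p q hpq hL u r1]; ring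
  have hLHS : (∑ r0 : Fin L → Bool, ∑ r1 : Fin L → Bool, ∑ r2 : Fin L → Bool,
      ∑ r3 : Fin L → Bool, ∑ r4 : Fin L → Bool,
        psi p q r0 * ((Wmat p q L) ^ t) r0 r1 * Wker p q r1 r2 * A r1 r2 *
          ((Wmat p q L) ^ (τ - 1)) r2 r3 * Wker p q r3 r4 * A r3 r4)
      = (∑ r0 : Fin L → Bool, ∑ r1 : Fin L → Bool, ∑ r2 : Fin L → Bool,
          psi p q r0 * ((Wmat p q L) ^ t) r0 r1 * Wker p q r1 r2 * A r1 r2)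
        * (∑ r1 : Fin L → Bool, ∑ r2 : Fin L → Bool,
          psi p q r1 * Wker p q r1 r2 * A r1 r2) := by
    rw [Finset.sum_mul]
    refine Finset.sum_congr rfl fun r0 _ => ?_
    rw [Finset.sum_mul]
    refine Finset.sum_congr rfl fun r1 _ => ?_
    rw [Finset.sum_mul]
    refine Finset.sum_congr rfl fun r2 _ => ?_
    rw [Finset.mul_sum]
    refine Finset.sum_congr rfl fun r3 _ => ?_
    rw [Finset.mul_sum]
    refine Finset.sum_congr rfl fun r4 _ => ?_
    rw [hτfact r2 r3]
    ring
  rw [hLHS, hF t, hF (t + τ)]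

end DSS
end

section
/- For each site x ∈ {1,…,L}, define the sub-stochastic matrix W_x^0 on {0,1}^L by W_x^0(r, r') = P(z^{t+1} = r' and s(x, t+1) = 0 | z^t = r), i.e., the restriction of the DSS transition kernel to transitions whose avalanche makes no toppling at site x. Then W_x^0 is nilpotent of index exactly x+1: (W_x^0)^{x+1} = 0 while (W_x^0)^x ≠ 0. -/
namespace DSS

variable {L : ℕ}

/-- Same as `stabilizeAux`, additionally recording the number of topplings performed at each
site: `stabilizeSAux p q R n s c k` is the probability that the process started from `s`
terminates within `n` steps on the stable field `c` having performed exactly `k x`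
topplings (transfers of a waiting particle from `x` to `x+1`) at each site `x`. -/
noncomputable def stabilizeSAux (p q : ℝ) (R : State L → Option (Fin L)) :
    ℕ → State L → (Fin L → Bool) → (Fin L → ℕ) → ℝ
  | 0, s, c, k => if s.w = 0 ∧ s.z = c ∧ k = 0 then 1 else 0
  | n + 1, s, c, k =>
    match R s with
    | none => if s.z = c ∧ k = 0 then 1 else 0
    | some x =>
      if s.z x then
        (if k x = 0 then 0
          else stabilizeSAux p q R n (topple s x) c (Function.update k x (k x - 1)))
      else
        p * stabilizeSAux p q R n (settle s x) c k
          + q * (if k x = 0 then 0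
              else stabilizeSAux p q R n (jump s x) c (Function.update k x (k x - 1)))

/-- Joint avalanche kernel: `Kker p q r r' k` is the probability that, adding one particle
at site 1 to the stable configuration `r`, the resulting avalanche leads to the stable
configuration `r'` with exactly `k x` topplings at each site `x`. -/
noncomputable def Kker (p q : ℝ) (r r' : Fin L → Bool) (k : Fin L → ℕ) : ℝ :=
  stabilizeSAux p q minRule (fuel (addGrain r)) (addGrain r) r' k

/-- `E[s(x,t)]`: expectation of the number of topplings at site `x` in the `t`-th avalanche
(`t ≥ 1`), for the stationary process started from `ψ`. -/
noncomputable def meanS (p q : ℝ) (L : ℕ) (t : ℕ) (x : Fin L) : ℝ :=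
  ∑ r0 : Fin L → Bool, ∑ r1 : Fin L → Bool, ∑ r2 : Fin L → Bool,
    ∑' k : Fin L → ℕ,
      psi p q r0 * ((Wmat p q L) ^ (t - 1)) r0 r1 * Kker p q r1 r2 k * (k x : ℝ)

/-- `E[s(x,t) s(x',t+τ)]` (`t, τ ≥ 1`) for the stationary process started from `ψ`. -/
noncomputable def corrS (p q : ℝ) (L : ℕ) (t τ : ℕ) (x x' : Fin L) : ℝ :=
  ∑ r0 : Fin L → Bool, ∑ r1 : Fin L → Bool, ∑ r2 : Fin L → Bool,
    ∑ r3 : Fin L → Bool, ∑ r4 : Fin L → Bool,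
      ∑' k1 : Fin L → ℕ, ∑' k2 : Fin L → ℕ,
        psi p q r0 * ((Wmat p q L) ^ (t - 1)) r0 r1 *
          Kker p q r1 r2 k1 * (k1 x : ℝ) *
          ((Wmat p q L) ^ (τ - 1)) r2 r3 *
          Kker p q r3 r4 k2 * (k2 x' : ℝ)


/-- Restriction of the avalanche kernel to avalanches making no toppling at site `j`. -/
noncomputable def W0ker (p q : ℝ) {L : ℕ} (j : Fin L) (r r' : Fin L → Bool) : ℝ :=
  ∑' k : Fin L → ℕ, if k j = 0 then Kker p q r r' k else 0

/-- The sub-stochastic matrix `W_j^0` of transitions whose avalanche makes no toppling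
at site `j`. -/
noncomputable def W0mat (p q : ℝ) (L : ℕ) (j : Fin L) :
    Matrix (Fin L → Bool) (Fin L → Bool) ℝ :=
  Matrix.of fun r r' => W0ker p q j r r'


section Aux
variable {p q : ℝ}

/-! ### Unfolding lemmas for `stabilizeSAux` -/

lemma stab_zero (R : State L → Option (Fin L)) (s : State L) (c : Fin L → Bool)
    (k : Fin L → ℕ) :
    stabilizeSAux p q R 0 s c k = if s.w = 0 ∧ s.z = c ∧ k = 0 then 1 else 0 := rfl

lemma stab_none (R : State L → Option (Fin L)) (n : ℕ) (s : State L)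
    (c : Fin L → Bool) (k : Fin L → ℕ) (hR : R s = none) :
    stabilizeSAux p q R (n+1) s c k = if s.z = c ∧ k = 0 then 1 else 0 := by
  simp [stabilizeSAux, hR]

lemma stab_succ (R : State L → Option (Fin L)) (n : ℕ) (s : State L)
    (c : Fin L → Bool) (k : Fin L → ℕ) (x : Fin L) (hR : R s = some x) :
    stabilizeSAux p q R (n+1) s c k =
      if s.z x then
        (if k x = 0 then 0
          else stabilizeSAux p q R n (topple s x) c (Function.update k x (k x - 1)))
      else
        p * stabilizeSAux p q R n (settle s x) c k
          + q * (if k x = 0 then 0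
              else stabilizeSAux p q R n (jump s x) c (Function.update k x (k x - 1))) := by
  simp [stabilizeSAux, hR]

/-! ### `minRule` lemmas -/

lemma minRule_none_s17 (z : Fin L → Bool) : minRule (⟨z, 0⟩ : State L) = none := by
  simp [minRule]

lemma minRule_eq_none {s : State L} (h : minRule s = none) : s.w = 0 := by
  unfold minRule at h
  split at h
  · assumption
  · exact absurd h (by simp)

lemma minRule_mem {s : State L} {x : Fin L} (h : minRule s = some x) : x ∈ s.w := by
  unfold minRule at h
  split at h
  · exact absurd h (by simp)
  · rename_i hw
    rw [Option.some_inj] at h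
    subst h
    have := Finset.min'_mem s.w.toFinset
      (Finset.nonempty_iff_ne_empty.mpr (by simpa [Multiset.toFinset_eq_empty] using hw))
    simpa [Multiset.mem_toFinset] using this

lemma minRule_singleton (z : Fin L → Bool) (x : Fin L) :
    minRule (⟨z, {x}⟩ : State L) = some x := by
  unfold minRule
  rw [dif_neg (by simp)]
  congr 1

lemma minRule_pair (z : Fin L → Bool) (a b : Fin L) (hab : a ≤ b) :
    minRule (⟨z, {a} + {b}⟩ : State L) = some a := by
  unfold minRule
  rw [dif_neg (by simp)]
  congr 1
  apply le_antisymm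
  · exact Finset.min'_le _ _ (by simp)
  · refine Finset.le_min' _ _ _ (fun y hy => ?_)
    rw [Multiset.mem_toFinset, Multiset.mem_add, Multiset.mem_singleton,
      Multiset.mem_singleton] at hy
    rcases hy with rfl | rfl
    · exact le_rfl
    · exact hab

/-! ### Basic analytic lemmas -/

lemma stab_done (n : ℕ) (c : Fin L → Bool) :
    stabilizeSAux p q minRule n ⟨c, 0⟩ c 0 = 1 := by
  cases n with
  | zero => simp [stab_zero]
  | succ n => simp [stab_none _ _ _ _ _ (minRule_none_s17 c)]

lemma stab_nonneg (hp : 0 ≤ p) (hq : 0 ≤ q) (R : State L → Option (Fin L)) :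
    ∀ (n : ℕ) (s : State L) (c : Fin L → Bool) (k : Fin L → ℕ),
      0 ≤ stabilizeSAux p q R n s c k := by
  intro n
  induction n with
  | zero =>
    intro s c k
    rw [stab_zero]
    split <;> norm_num
  | succ n ih =>
    intro s c k
    rcases hR : R s with _ | x
    · rw [stab_none _ _ _ _ _ hR]; split <;> norm_num
    · rw [stab_succ _ _ _ _ _ _ hR]
      have h1 : (0:ℝ) ≤ (if k x = 0 then 0
          else stabilizeSAux p q R n (jump s x) c (Function.update k x (k x - 1))) := by
        split
        · exact le_rfl
        · exact ih _ _ _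
      have h2 : (0:ℝ) ≤ (if k x = 0 then 0
          else stabilizeSAux p q R n (topple s x) c (Function.update k x (k x - 1))) := by
        split
        · exact le_rfl
        · exact ih _ _ _
      have h3 := ih (settle s x) c k
      split
      · exact h2
      · have := mul_nonneg hp h3
        have := mul_nonneg hq h1
        linarith

lemma stab_support (R : State L → Option (Fin L)) :
    ∀ (n : ℕ) (s : State L) (c : Fin L → Bool) (k : Fin L → ℕ),
      stabilizeSAux p q R n s c k ≠ 0 → ∀ x, k x ≤ n := by
  intro n
  induction n with
  | zero =>
    intro s c k h x
    rw [stab_zero] at h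
    split at h
    · rename_i hh; simp [hh.2.2]
    · exact absurd rfl h
  | succ n ih =>
    intro s c k h x
    rcases hR : R s with _ | y
    · rw [stab_none _ _ _ _ _ hR] at h
      split at h
      · rename_i hh; simp [hh.2]
      · exact absurd rfl h
    · rw [stab_succ _ _ _ _ _ _ hR] at h
      have key : ∀ s' : State L,
          stabilizeSAux p q R n s' c (Function.update k y (k y - 1)) ≠ 0 → k x ≤ n + 1 := by
        intro s' h'
        have hall := ih _ _ _ h'
        rcases eq_or_ne x y with rfl | hxy
        · have := hall x; rw [Function.update_self] at this; omega
        · have := hall x; rw [Function.update_of_ne hxy] at this; omega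
      split at h
      · split at h
        · exact absurd rfl h
        · exact key _ h
      · by_cases hA : stabilizeSAux p q R n (settle s y) c k = 0
        · rw [hA, mul_zero, zero_add] at h
          have hB := (mul_ne_zero_iff.mp h).2
          split at hB
          · exact absurd rfl hB
          · exact key _ hB
        · have := ih _ _ _ hA x; omega

/-! ### Counting particles in the region `{0, …, j}` -/

/-- Number of stable particles at sites `≤ j`. -/
def Mz (j : Fin L) (z : Fin L → Bool) : ℕ :=
  ∑ x : Fin L, if x.val ≤ j.val ∧ z x = true then 1 else 0

/-- Number of waiting particles at sites `≤ j`. -/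
def Mw (j : Fin L) (w : Multiset (Fin L)) : ℕ :=
  Multiset.card (w.filter (fun x => x.val ≤ j.val))

lemma Mz_update (j x : Fin L) (z : Fin L → Bool) (b : Bool) :
    Mz j (Function.update z x b) + (if x.val ≤ j.val ∧ z x = true then 1 else 0)
      = Mz j z + (if x.val ≤ j.val ∧ b = true then 1 else 0) := by
  have key : ∀ g : Fin L → Bool,
      Mz j g = (∑ y ∈ Finset.univ.erase x, if y.val ≤ j.val ∧ g y = true then 1 else 0)
        + (if x.val ≤ j.val ∧ g x = true then 1 else 0) :=
    fun g => (Finset.sum_erase_add _ _ (Finset.mem_univ x)).symm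
  rw [key (Function.update z x b), key z]
  have hs : ∑ y ∈ Finset.univ.erase x,
        (if y.val ≤ j.val ∧ Function.update z x b y = true then 1 else 0)
      = ∑ y ∈ Finset.univ.erase x, (if y.val ≤ j.val ∧ z y = true then 1 else 0) := by
    refine Finset.sum_congr rfl (fun y hy => ?_)
    rw [Function.update_of_ne (Finset.ne_of_mem_erase hy)]
  rw [hs, Function.update_self]
  omega

lemma Mz_le (j : Fin L) (z : Fin L → Bool) : Mz j z ≤ j.val + 1 := by
  have h1 : Mz j z = (Finset.univ.filter
      (fun x : Fin L => x.val ≤ j.val ∧ z x = true)).card := (Finset.card_filter _ _).symm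
  have h2 : (Finset.univ.filter (fun x : Fin L => x.val ≤ j.val ∧ z x = true)).card
      ≤ (Finset.range (j.val + 1)).card := by
    apply Finset.card_le_card_of_injOn (fun x => x.val)
    · intro x hx
      simp only [Finset.mem_coe, Finset.mem_filter, Finset.mem_univ, true_and] at hx
      simp only [Finset.mem_coe, Finset.mem_range]
      omega
    · intro a _ b _ hab
      exact Fin.ext hab
  rw [Finset.card_range] at h2
  omega

lemma Mw_add (j : Fin L) (w v : Multiset (Fin L)) : Mw j (w + v) = Mw j w + Mw j v := by
  simp [Mw, Multiset.filter_add]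

lemma Mw_singleton (j x : Fin L) : Mw j {x} = if x.val ≤ j.val then 1 else 0 := by
  simp only [Mw, Multiset.filter_singleton]
  split <;> simp

lemma Mw_zero (j : Fin L) : Mw j 0 = 0 := by simp [Mw]

lemma Mw_erase (j : Fin L) {w : Multiset (Fin L)} {x : Fin L} (hx : x ∈ w) :
    Mw j w = Mw j (w.erase x) + (if x.val ≤ j.val then 1 else 0) := by
  conv_lhs => rw [← Multiset.cons_erase hx]
  rw [show (x ::ₘ w.erase x) = {x} + w.erase x by simp]
  rw [Mw_add, Mw_singleton, add_comm]

lemma Mw_succSite (j x : Fin L) :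
    Mw j (succSite L x) = if x.val + 1 ≤ j.val then 1 else 0 := by
  unfold succSite
  split
  · rw [Mw_singleton]
  · rename_i h
    rw [if_neg, Mw_zero]
    have := j.isLt
    omega

/-! ### Invariant: with no toppling at `j`, the region population grows by the waiting
particles initially inside the region. -/

lemma stab_invariant (j : Fin L) :
    ∀ (n : ℕ) (s : State L) (c : Fin L → Bool) (k : Fin L → ℕ),
      k j = 0 → stabilizeSAux p q minRule n s c k ≠ 0 →
      Mz j c = Mz j s.z + Mw j s.w := by
  intro n
  induction n with
  | zero =>
    intro s c k hkj h
    rw [stab_zero] at h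
    split at h
    · rename_i hh
      rw [← hh.2.1, hh.1, Mw_zero]
      omega
    · exact absurd rfl h
  | succ n ih =>
    intro s c k hkj h
    rcases hR : minRule s with _ | x
    · rw [stab_none _ _ _ _ _ hR] at h
      split at h
      · rename_i hh
        rw [← hh.1, minRule_eq_none hR, Mw_zero]
        omega
      · exact absurd rfl h
    · have hxw : x ∈ s.w := minRule_mem hR
      rw [stab_succ _ _ _ _ _ _ hR] at h
      split at h
      · -- topple branch, s.z x = true
        rename_i hzx
        split at h
        · exact absurd rfl h
        · rename_i hkx
          have hxj : x ≠ j := fun e => hkx (e ▸ hkj)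
          have hkj' : Function.update k x (k x - 1) j = 0 := by
            rw [Function.update_of_ne (Ne.symm hxj)]; exact hkj
          have hIH := ih _ _ _ hkj' h
          have hMz := Mz_update j x s.z false
          rw [hzx] at hMz
          have hMw : Mw j (topple s x).w = Mw j s.w + (if x.val + 1 ≤ j.val then 1 else 0) := by
            rw [show (topple s x).w = s.w + succSite L x from rfl, Mw_add, Mw_succSite]
          have hxjv : x.val ≠ j.val := fun e => hxj (Fin.ext e)
          rw [hIH, show (topple s x).z = Function.update s.z x false from rfl, hMw]
          by_cases hle : x.val ≤ j.val
          · rw [if_pos (by exact ⟨hle, rfl⟩)] at hMz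
            rw [if_pos (by omega)]
            simp only [Bool.false_eq_true, and_false, if_false] at hMz
            omega
          · rw [if_neg (by tauto)] at hMz
            rw [if_neg (by omega)]
            simp only [Bool.false_eq_true, and_false, if_false] at hMz
            omega
      · -- z x = false
        rename_i hzx
        have hzx' : s.z x = false := by
          revert hzx; cases s.z x <;> simp
        by_cases hA : stabilizeSAux p q minRule n (settle s x) c k = 0
        · -- jump branch must be nonzero
          rw [hA, mul_zero, zero_add] at h
          have hB := (mul_ne_zero_iff.mp h).2
          split at hB
          · exact absurd rfl hB
          · rename_i hkx
            have hxj : x ≠ j := fun e => hkx (e ▸ hkj)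
            have hkj' : Function.update k x (k x - 1) j = 0 := by
              rw [Function.update_of_ne (Ne.symm hxj)]; exact hkj
            have hIH := ih _ _ _ hkj' hB
            have hMw : Mw j (jump s x).w
                = Mw j (s.w.erase x) + (if x.val + 1 ≤ j.val then 1 else 0) := by
              rw [show (jump s x).w = s.w.erase x + succSite L x from rfl, Mw_add, Mw_succSite]
            have hMe := Mw_erase j hxw
            have hxjv : x.val ≠ j.val := fun e => hxj (Fin.ext e)
            rw [hIH, show (jump s x).z = s.z from rfl, hMw, hMe]
            by_cases hle : x.val ≤ j.val
            · rw [if_pos hle, if_pos (by omega)]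
            · rw [if_neg hle, if_neg (by omega)]
        · -- settle branch
          have hIH := ih _ _ _ hkj hA
          have hMz := Mz_update j x s.z true
          rw [hzx'] at hMz
          have hMe := Mw_erase j hxw
          rw [hIH, show (settle s x).z = Function.update s.z x true from rfl,
            show (settle s x).w = s.w.erase x from rfl, hMe]
          simp only [Bool.false_eq_true, and_false, if_false, and_true] at hMz
          omega

/-! ### Consequence for `W0ker` -/

lemma W0_step (hL : 0 < L) (j : Fin L) {r r' : Fin L → Bool}
    (h : W0ker p q j r r' ≠ 0) : Mz j r' = Mz j r + 1 := by
  have hex : ∃ k : Fin L → ℕ, k j = 0 ∧ Kker p q r r' k ≠ 0 := by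
    by_contra hc
    push_neg at hc
    apply h
    unfold W0ker
    convert tsum_zero with k
    split
    · rename_i hk; exact hc k hk
    · rfl
  obtain ⟨k, hkj, hK⟩ := hex
  unfold Kker at hK
  have := stab_invariant j _ _ _ _ hkj hK
  rw [this]
  have hzw : (addGrain r : State L).z = r ∧ (addGrain r : State L).w = {⟨0, hL⟩} := by
    constructor
    · rfl
    · simp [addGrain, dif_pos hL]
  rw [hzw.1, hzw.2, Mw_singleton, if_pos (by simp)]

lemma W0ker_nonneg (hp : 0 ≤ p) (hq : 0 ≤ q) (j : Fin L) (r r' : Fin L → Bool) :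
    0 ≤ W0ker p q j r r' := by
  apply tsum_nonneg
  intro k
  split
  · exact stab_nonneg hp hq _ _ _ _ _
  · exact le_rfl

lemma pow_step (hL : 0 < L) (j : Fin L) :
    ∀ (n : ℕ) (a b : Fin L → Bool), ((W0mat p q L j) ^ n) a b ≠ 0 →
      Mz j b = Mz j a + n := by
  intro n
  induction n with
  | zero =>
    intro a b h
    rw [pow_zero] at h
    rcases eq_or_ne a b with rfl | hab
    · omega
    · rw [Matrix.one_apply_ne hab] at h
      exact absurd rfl h
  | succ n ih =>
    intro a b h
    rw [pow_succ, Matrix.mul_apply] at h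
    obtain ⟨c, -, hc⟩ := Finset.exists_ne_zero_of_sum_ne_zero h
    have h1 := (mul_ne_zero_iff.mp hc).1
    have h2 := (mul_ne_zero_iff.mp hc).2
    have e1 := ih a c h1
    have e2 := W0_step hL j (h2 : W0ker p q j c b ≠ 0)
    omega

/-! ### The positive chain -/

/-- Configuration with sites `0, …, i-1` occupied. -/
def rcfg (L i : ℕ) : Fin L → Bool := fun x => decide (x.val < i)

/-- One toppling at each of the sites `m, …, i-1`. -/
def kfun (L m i : ℕ) : Fin L → ℕ := fun x => if m ≤ x.val ∧ x.val < i then 1 else 0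

lemma kfun_zero (m : ℕ) : kfun L m m = 0 := by
  funext x
  simp only [kfun, Pi.zero_apply, ite_eq_right_iff]
  omega

lemma kfun_self (m i : ℕ) (hm : m < L) (h : m < i) : kfun L m i ⟨m, hm⟩ = 1 := by
  simp [kfun, h]

lemma kfun_update (m i : ℕ) (hm : m < L) :
    Function.update (kfun L m i) ⟨m, hm⟩ 0 = kfun L (m+1) i := by
  funext y
  rcases eq_or_ne y ⟨m, hm⟩ with rfl | hy
  · rw [Function.update_self]
    simp only [kfun]
    rw [if_neg (by omega)]
  · rw [Function.update_of_ne hy]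
    have hyv : y.val ≠ m := fun e => hy (Fin.ext e)
    simp only [kfun]
    exact if_congr (by omega) rfl rfl

lemma rcfg_update_settle (m : ℕ) (hm : m < L) :
    Function.update (rcfg L m) ⟨m, hm⟩ true = rcfg L (m+1) := by
  funext y
  rcases eq_or_ne y ⟨m, hm⟩ with rfl | hy
  · rw [Function.update_self]
    simp [rcfg]
  · rw [Function.update_of_ne hy]
    have hyv : y.val ≠ m := fun e => hy (Fin.ext e)
    simp only [rcfg, decide_eq_decide]
    omega

lemma rcfg_update_cancel (m i : ℕ) (hm : m < L) (h : m < i) :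
    Function.update (Function.update (rcfg L i) ⟨m, hm⟩ false) ⟨m, hm⟩ true = rcfg L i := by
  rw [Function.update_idem]
  have he : rcfg L i ⟨m, hm⟩ = true := by simp [rcfg, h]
  rw [← he, Function.update_eq_self]

lemma wave (hp : 0 < p) (hq : 0 < q) :
    ∀ (d m n i : ℕ) (hm : m < L), i < L → m + d = i → 2*d + 1 ≤ n →
      0 < stabilizeSAux p q minRule n
          (⟨rcfg L i, {⟨m, hm⟩}⟩ : State L) (rcfg L (i+1)) (kfun L m i) := by
  intro d
  induction d with
  | zero =>
    intro m n i hm hiL hmd hn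
    obtain rfl : m = i := by omega
    obtain ⟨n', rfl⟩ : ∃ n', n = n' + 1 := ⟨n - 1, by omega⟩
    rw [stab_succ _ _ _ _ _ ⟨m, hm⟩ (minRule_singleton _ _)]
    rw [if_neg (by simp [rcfg])]
    have hset : settle (⟨rcfg L m, {⟨m, hm⟩}⟩ : State L) ⟨m, hm⟩
        = (⟨rcfg L (m+1), 0⟩ : State L) := by
      unfold settle
      congr 1
      · exact rcfg_update_settle m hm
      · simp
    rw [hset, kfun_zero, stab_done, if_pos (by simp)]
    rw [mul_one, mul_zero, add_zero]
    exact hp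
  | succ d ih =>
    intro m n i hm hiL hmd hn
    obtain ⟨n', rfl⟩ : ∃ n', n = n' + 1 + 1 := ⟨n - 2, by omega⟩
    have hm1 : m + 1 < L := by omega
    have hmi : m < i := by omega
    -- step 1: topple at m
    rw [stab_succ _ _ _ _ _ ⟨m, hm⟩ (minRule_singleton _ _)]
    rw [if_pos (by simp only [rcfg, decide_eq_true_eq]; omega)]
    rw [if_neg (by rw [kfun_self m i hm hmi]; omega)]
    have hk : Function.update (kfun L m i) ⟨m, hm⟩
        (kfun L m i ⟨m, hm⟩ - 1) = kfun L (m+1) i := by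
      rw [kfun_self m i hm hmi]
      exact kfun_update m i hm
    rw [hk]
    have htop : topple (⟨rcfg L i, {⟨m, hm⟩}⟩ : State L) ⟨m, hm⟩
        = (⟨Function.update (rcfg L i) ⟨m, hm⟩ false,
            {⟨m, hm⟩} + {⟨m+1, hm1⟩}⟩ : State L) := by
      unfold topple succSite
      congr 1
      simp only []
      rw [dif_pos hm1]
    rw [htop]
    -- step 2: settle at m
    rw [stab_succ _ _ _ _ _ ⟨m, hm⟩
      (minRule_pair _ _ _ (by rw [Fin.mk_le_mk]; omega))]
    rw [if_neg (by simp [Function.update_self])]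
    have hset : settle (⟨Function.update (rcfg L i) ⟨m, hm⟩ false,
          {⟨m, hm⟩} + {⟨m+1, hm1⟩}⟩ : State L) ⟨m, hm⟩
        = (⟨rcfg L i, {⟨m+1, hm1⟩}⟩ : State L) := by
      unfold settle
      congr 1
      · exact rcfg_update_cancel m i hm hmi
      · rw [Multiset.singleton_add, Multiset.erase_cons_head]
    rw [hset]
    have hc : kfun L (m+1) i ⟨m, hm⟩ = 0 := by
      simp only [kfun]
      rw [if_neg (by omega)]
    rw [if_pos hc, mul_zero, add_zero]
    exact mul_pos hp (ih (m+1) n' i hm1 hiL (by omega) (by omega))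

set_option maxHeartbeats 1000000 in
lemma Kker_pos (hL : 0 < L) (hp : 0 < p) (hq : 0 < q) (i : ℕ) (hi : i < L) :
    0 < Kker p q (rcfg L i) (rcfg L (i+1)) (kfun L 0 i) := by
  unfold Kker
  have hfuel : 2 * i + 1 ≤ fuel (addGrain (rcfg L i)) := by
    have hw : (addGrain (rcfg L i) : State L).w = {⟨0, hL⟩} := by
      simp [addGrain, dif_pos hL]
    unfold fuel potential
    rw [hw]
    rw [Multiset.map_singleton, Multiset.sum_singleton, Multiset.card_singleton]
    have hv : ((⟨0, hL⟩ : Fin L) : ℕ) = 0 := rfl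
    rw [hv]
    omega
  have hgrain : (addGrain (rcfg L i) : State L) = ⟨rcfg L i, {⟨0, hL⟩}⟩ := by
    unfold addGrain
    congr 1
    rw [dif_pos hL]
  rw [hgrain]
  rw [hgrain] at hfuel
  exact wave hp hq i 0 (fuel (⟨rcfg L i, {⟨0, hL⟩}⟩ : State L)) i hL hi (by omega) (by omega)

lemma Kker_nonneg (hp : 0 ≤ p) (hq : 0 ≤ q) (r r' : Fin L → Bool) (k : Fin L → ℕ) :
    0 ≤ Kker p q r r' k := stab_nonneg hp hq _ _ _ _ _

lemma W0ker_pos (hL : 0 < L) (hp : 0 < p) (hq : 0 < q) (j : Fin L) (i : ℕ)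
    (hij : i ≤ j.val) : 0 < W0ker p q j (rcfg L i) (rcfg L (i+1)) := by
  have hiL : i < L := lt_of_le_of_lt hij j.isLt
  set F := fuel (addGrain (rcfg L i)) with hF
  have hsum : Summable (fun k : Fin L → ℕ =>
      if k j = 0 then Kker p q (rcfg L i) (rcfg L (i+1)) k else 0) := by
    apply summable_of_ne_finset_zero
      (s := Fintype.piFinset (fun _ : Fin L => Finset.range (F+1)))
    intro k hk
    split
    · by_contra hK
      apply hk
      rw [Fintype.mem_piFinset]
      intro x
      rw [Finset.mem_range]
      have := stab_support minRule F _ _ _ hK x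
      omega
    · rfl
  have hterm : (if (kfun L 0 i) j = 0 then
        Kker p q (rcfg L i) (rcfg L (i+1)) (kfun L 0 i) else 0)
      = Kker p q (rcfg L i) (rcfg L (i+1)) (kfun L 0 i) := by
    rw [if_pos]
    simp only [kfun]
    rw [if_neg (by omega)]
  have hle := Summable.le_tsum hsum (kfun L 0 i) (fun b _ => by
    split
    · exact Kker_nonneg hp.le hq.le _ _ _
    · exact le_rfl)
  rw [hterm] at hle
  exact lt_of_lt_of_le (Kker_pos hL hp hq i hiL) hle

lemma pow_entry_nonneg (hp : 0 ≤ p) (hq : 0 ≤ q) (j : Fin L) :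
    ∀ (n : ℕ) (a b : Fin L → Bool), 0 ≤ ((W0mat p q L j) ^ n) a b := by
  intro n
  induction n with
  | zero =>
    intro a b
    rw [pow_zero, Matrix.one_apply]
    split <;> norm_num
  | succ n ih =>
    intro a b
    rw [pow_succ, Matrix.mul_apply]
    apply Finset.sum_nonneg
    intro c _
    exact mul_nonneg (ih a c) (W0ker_nonneg hp hq j c b)

lemma chain_pos (hL : 0 < L) (hp : 0 < p) (hq : 0 < q) (j : Fin L) :
    ∀ i : ℕ, i ≤ j.val + 1 →
      0 < ((W0mat p q L j) ^ i) (rcfg L 0) (rcfg L i) := by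
  intro i
  induction i with
  | zero =>
    intro _
    rw [pow_zero, Matrix.one_apply_eq]
    norm_num
  | succ i ih =>
    intro hi
    rw [pow_succ, Matrix.mul_apply]
    apply Finset.sum_pos'
    · intro c _
      exact mul_nonneg (pow_entry_nonneg hp.le hq.le j i _ _)
        (W0ker_nonneg hp.le hq.le j c _)
    · exact ⟨rcfg L i, Finset.mem_univ _,
        mul_pos (ih (by omega)) (W0ker_pos hL hp hq j i (by omega))⟩

end Aux

/-- the sub-stochastic matrix `W_j^0` (transitions with no toppling at the
site of Lean index `j`, i.e. paper site `j+1`) is nilpotent of index exactly `j+2`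
(paper: `x+1` for paper site `x = j+1`). -/
theorem W0_nilpotent_of_index
    (L : ℕ) (hL : 0 < L) (p q : ℝ) (hp : 0 < p) (hq : 0 < q) (hpq : p + q = 1)
    (j : Fin L) :
    (W0mat p q L j) ^ ((j : ℕ) + 2) = 0 ∧ (W0mat p q L j) ^ ((j : ℕ) + 1) ≠ 0 := by
  constructor
  · ext a b
    simp only [Matrix.zero_apply]
    by_contra hab
    have h1 := pow_step hL j ((j : ℕ) + 2) a b hab
    have h2 := Mz_le j b
    omega
  · intro hzero
    have hpos := chain_pos hL hp hq j (j.val + 1) le_rfl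
    rw [hzero] at hpos
    simp at hpos

end DSS
end
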